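/- arXiv:1403.2091 — 2 statements merged into one kernel-verified Lean document; each statement's English description precedes it below -/
import Mathlib

section
/- Define an action of D₈ = ⟨a,b ∣ a² = 1, b⁴ = 1, b^a = b⁻¹⟩ on the ℤ₂-module ℤ₂[i] of 2-adic Gaussian integers by 1.a := 1, i.a := −i (complex conjugation) and 1.b := i, i.b := −1 (multiplication by i). Then this action is uniserial: with N₀ := ℤ₂[i] and N_{j+1} := [D₈, N_j], each index [N_j : N_{j+1}] equals 2. -/
/-- `ℤ₂[i]`, the Gaussian integers over the 2-adic integers, as the free `ℤ₂`-module
`ℤ₂ ⊕ ℤ₂·i`: the pair `(x, y)` represents `x + y·i`. -/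
abbrev ZTwoI : Type := PadicInt 2 × PadicInt 2

/-- The lower `G`-central series: `N₀ = N`, `N_{j+1} = [G, N_j] = ⟨n.g − n : n ∈ N_j, g ∈ G⟩`. -/
def lowerRCentral (G : Type*) [Group G] (N : Type*) [AddCommGroup N] [DistribMulAction G N] :
    ℕ → AddSubgroup N
  | 0 => ⊤
  | (j + 1) => AddSubgroup.closure {x | ∃ n ∈ lowerRCentral G N j, ∃ g : G, x = g • n - n}

namespace D8Gauss

open AddSubgroup DihedralGroup

/-- Multiplication by `i - 1` on `ℤ₂[i]`. -/
noncomputable def T : ZTwoI →+ ZTwoI where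
  toFun x := (-x.2 - x.1, x.1 - x.2)
  map_zero' := by simp
  map_add' x y := by
    refine Prod.ext ?_ ?_ <;> (simp; try ring)

/-- Multiplication by `i` on `ℤ₂[i]`. -/
noncomputable def J : ZTwoI →+ ZTwoI where
  toFun x := (-x.2, x.1)
  map_zero' := by simp
  map_add' x y := by refine Prod.ext ?_ ?_ <;> (simp; try ring)

/-- Complex conjugation on `ℤ₂[i]`. -/
noncomputable def C : ZTwoI → ZTwoI := fun x => (x.1, -x.2)

lemma T_apply (x : ZTwoI) : T x = (-x.2 - x.1, x.1 - x.2) := rfl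
lemma J_apply (x : ZTwoI) : J x = (-x.2, x.1) := rfl

lemma T_injective : Function.Injective T := by
  intro x y h
  have h1 : -x.2 - x.1 = -y.2 - y.1 := congrArg Prod.fst h
  have h2 : x.1 - x.2 = y.1 - y.2 := congrArg Prod.snd h
  have e1 : (2 : PadicInt 2) * x.1 = 2 * y.1 := by linear_combination h2 - h1
  have e2 : (2 : PadicInt 2) * x.2 = 2 * y.2 := by linear_combination -h1 - h2
  have h2' : (2 : PadicInt 2) ≠ 0 := two_ne_zero
  exact Prod.ext (mul_left_cancel₀ h2' e1) (mul_left_cancel₀ h2' e2)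

lemma TJ_comm (x : ZTwoI) : T (J x) = J (T x) := by
  refine Prod.ext ?_ ?_ <;> (simp [T_apply, J_apply]; try ring)

/-- `L j` is the image of `ℤ₂[i]` under `j` applications of `T`,
i.e. the ideal `(i-1)^j ℤ₂[i]`. -/
noncomputable def L : ℕ → AddSubgroup ZTwoI :=
  fun j => Nat.rec ⊤ (fun _ S => S.map T) j

lemma L_zero : L 0 = ⊤ := rfl

lemma L_succ (j : ℕ) : L (j + 1) = (L j).map T := rfl

lemma T_mem {j : ℕ} {n : ZTwoI} (hn : n ∈ L j) : T n ∈ L (j + 1) :=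
  mem_map_of_mem T hn

lemma L_mono : ∀ j, L (j + 1) ≤ L j
  | 0 => le_top
  | (j + 1) => by rw [L_succ, L_succ j]; exact map_mono (L_mono j)

lemma J_mem : ∀ j, ∀ n ∈ L j, J n ∈ L j
  | 0, _, _ => trivial
  | (j + 1), n, hn => by
    obtain ⟨m, hm, rfl⟩ := hn
    rw [← TJ_comm]
    exact mem_map_of_mem T (J_mem j m hm)

lemma conj_mem : ∀ j, ∀ n ∈ L j, C n - n ∈ L (j + 1)
  | 0, n, _ => by
    refine ⟨(-n.2, n.2), trivial, ?_⟩
    refine Prod.ext ?_ ?_ <;> (simp [T_apply, C]; try ring)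
  | (j + 1), n, hn => by
    obtain ⟨m, hm, rfl⟩ := hn
    have key : C (T m) - T m = T (J (C m - m) + T m) := by
      refine Prod.ext ?_ ?_ <;> (simp [T_apply, J_apply, C]; try ring)
    rw [key]
    refine T_mem (add_mem ?_ (T_mem hm))
    exact J_mem (j + 1) _ (conj_mem j m hm)

section Action

variable [inst : DistribMulAction (DihedralGroup 4) ZTwoI]
    (ha : ∀ x : ZTwoI, (DihedralGroup.sr 0 : DihedralGroup 4) • x = (x.1, -x.2))
    (hb : ∀ x : ZTwoI, (DihedralGroup.r 1 : DihedralGroup 4) • x = (-x.2, x.1))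

include hb in
lemma r_smul : ∀ k : ZMod 4, ∀ n : ZTwoI, (r k : DihedralGroup 4) • n = (J^[k.val]) n := by
  have h2 : (r 2 : DihedralGroup 4) = r 1 * r 1 := by decide
  have h3 : (r 3 : DihedralGroup 4) = r 1 * (r 1 * r 1) := by decide
  have h0 : (r 0 : DihedralGroup 4) = 1 := by decide
  have hk : ∀ k : ZMod 4, k = 0 ∨ k = 1 ∨ k = 2 ∨ k = 3 := by decide
  intro k n
  have hJ : ∀ m : ZTwoI, (r 1 : DihedralGroup 4) • m = J m := fun m => hb m
  rcases hk k with rfl | rfl | rfl | rfl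
  · rw [h0, one_smul]; rfl
  · rw [hJ]; rfl
  · rw [h2, mul_smul, hJ, hJ]; rfl
  · rw [h3, mul_smul, mul_smul, hJ, hJ, hJ]; rfl

include ha hb in
lemma gen_mem (j : ℕ) {n : ZTwoI} (hn : n ∈ L j) (g : DihedralGroup 4) :
    g • n - n ∈ L (j + 1) := by
  have hJiter : ∀ i : ℕ, (J^[i]) n ∈ L j := by
    intro i
    induction i with
    | zero => exact hn
    | succ i ih => rw [Function.iterate_succ_apply']; exact J_mem j _ ih
  have hr_case : ∀ k : ZMod 4, (r k : DihedralGroup 4) • n - n ∈ L (j + 1) := by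
    intro k
    rw [r_smul hb]
    have hk : k.val = 0 ∨ k.val = 1 ∨ k.val = 2 ∨ k.val = 3 := by
      revert k; decide
    rcases hk with h | h | h | h <;> rw [h]
    · rw [Function.iterate_zero_apply, sub_self]; exact zero_mem _
    · -- J n - n = T n
      have : (J^[1]) n - n = T n := by
        refine Prod.ext ?_ ?_ <;> (simp [T_apply, J_apply]; try ring)
      rw [this]; exact T_mem hn
    · -- J² n - n = -2n = T (T (-J n))
      have : (J^[2]) n - n = T (T (-(J n))) := by
        refine Prod.ext ?_ ?_ <;>
          (simp [Function.iterate_succ_apply', T_apply, J_apply]; try ring)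
      rw [this]
      exact T_mem (L_mono j (T_mem (neg_mem (J_mem j n hn))))
    · -- J³ n - n = T (J n)
      have : (J^[3]) n - n = T (J n) := by
        refine Prod.ext ?_ ?_ <;>
          (simp [Function.iterate_succ_apply', T_apply, J_apply]; try ring)
      rw [this]
      exact T_mem (J_mem j n hn)
  cases g with
  | r k => exact hr_case k
  | sr k =>
    have hsr : (sr k : DihedralGroup 4) = sr 0 * r k := by
      rw [sr_mul_r, zero_add]
    set m : ZTwoI := (r k : DihedralGroup 4) • n with hm
    have hmem : m ∈ L j := by
      rw [hm, r_smul hb]; exact hJiter _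
    have : (sr k : DihedralGroup 4) • n - n = (C m - m) + (m - n) := by
      rw [hsr, mul_smul, ← hm, ha m]
      show C m - n = C m - m + (m - n)
      abel
    rw [this]
    exact add_mem (conj_mem j m hmem) (hr_case k)

include ha hb in
lemma lower_eq : ∀ j, lowerRCentral (DihedralGroup 4) ZTwoI j = L j := by
  intro j
  induction j with
  | zero => rfl
  | succ j ih =>
    apply le_antisymm
    · show AddSubgroup.closure _ ≤ L (j + 1)
      rw [closure_le]
      rintro x ⟨n, hn, g, rfl⟩
      rw [ih] at hn
      exact gen_mem ha hb j hn g
    · rw [L_succ]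
      rintro x ⟨n, hn, rfl⟩
      apply AddSubgroup.subset_closure
      refine ⟨n, by rw [ih]; exact hn, r 1, ?_⟩
      rw [hb n]
      refine Prod.ext ?_ ?_ <;> (simp [T_apply]; try ring)

end Action

/-- The quotient map `ℤ₂[i] → ℤ₂[i]/(1+i) ≅ 𝔽₂`. -/
noncomputable def ψ : ZTwoI →+ ZMod 2 where
  toFun x := PadicInt.toZMod x.1 + PadicInt.toZMod x.2
  map_zero' := by simp
  map_add' x y := by simp [map_add]; ring

lemma ψ_apply (x : ZTwoI) : ψ x = PadicInt.toZMod x.1 + PadicInt.toZMod x.2 := rfl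

lemma two_dvd_of_toZMod_eq_zero {x : PadicInt 2} (h : PadicInt.toZMod x = 0) :
    (2 : PadicInt 2) ∣ x := by
  have : x ∈ RingHom.ker (PadicInt.toZMod : PadicInt 2 →+* ZMod 2) := h
  rw [PadicInt.ker_toZMod, PadicInt.maximalIdeal_eq_span_p,
    Ideal.mem_span_singleton] at this
  exact_mod_cast this

lemma range_T_eq : T.range = ψ.ker := by
  apply le_antisymm
  · rintro x ⟨m, rfl⟩
    show ψ (T m) = 0
    have : ψ (T m) = PadicInt.toZMod (-(2 * m.2)) := by
      show PadicInt.toZMod (-m.2 - m.1) + PadicInt.toZMod (m.1 - m.2) = _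
      rw [← map_add]; congr 1; ring
    rw [this, map_neg, map_mul, map_ofNat]
    show -((0 : ZMod 2) * _) = 0
    ring
  · intro x hx
    have h0 : PadicInt.toZMod (x.1 + x.2) = 0 := by
      have : PadicInt.toZMod x.1 + PadicInt.toZMod x.2 = 0 := hx
      rw [map_add]; exact this
    obtain ⟨w, hw⟩ := two_dvd_of_toZMod_eq_zero h0
    refine ⟨(x.2 - w, -w), ?_⟩
    refine Prod.ext ?_ ?_ <;> (simp [T_apply]; try linear_combination -hw)

lemma ψ_surjective : Function.Surjective ψ := by
  intro c
  have hc : c = 0 ∨ c = 1 := by revert c; decide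
  rcases hc with rfl | rfl
  · exact ⟨0, map_zero ψ⟩
  · refine ⟨(1, 0), ?_⟩
    rw [ψ_apply]
    simp

lemma index_L_one : (L 1).index = 2 := by
  have hL : L 1 = ψ.ker := by
    rw [L_succ]
    show AddSubgroup.map T ⊤ = ψ.ker
    rw [← AddMonoidHom.range_eq_map, range_T_eq]
  rw [hL, AddSubgroup.index_ker]
  rw [AddMonoidHom.range_eq_top.mpr ψ_surjective]
  rw [Nat.card_congr AddSubgroup.topEquiv.toEquiv]
  simp [Nat.card_eq_fintype_card]

lemma relindex_L : ∀ j, (L (j + 1)).relIndex (L j) = 2 := by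
  intro j
  induction j with
  | zero =>
    show (L 1).relIndex ⊤ = 2
    rw [AddSubgroup.relIndex_top_right, index_L_one]
  | succ j ih =>
    have key : (L (j + 2)).relIndex (L (j + 1)) = (L (j + 1)).relIndex (L j) := by
      conv_lhs => rw [L_succ j]
      rw [← AddSubgroup.relIndex_comap (L (j + 2)) T (L j)]
      rw [show AddSubgroup.comap T (L (j + 2)) = L (j + 1) from by
        rw [L_succ (j + 1)]
        exact AddSubgroup.comap_map_eq_self_of_injective T_injective _]
    rw [key, ih]

end D8Gauss

/-- Define an action of `D₈ = ⟨a, b⟩` (the dihedral group of order 8, `a = sr 0`, `b = r 1`)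
on the `ℤ₂`-module `ℤ₂[i]` by letting `a` act as complex conjugation and `b` as
multiplication by `i`. Then this action is uniserial: with `N₀ := ℤ₂[i]` and
`N_{j+1} := [D₈, N_j]`, each index `[N_j : N_{j+1}]` equals `2`. -/
theorem d8_action_on_gaussian_uniserial
    [inst : DistribMulAction (DihedralGroup 4) ZTwoI]
    [SMulCommClass (DihedralGroup 4) (PadicInt 2) ZTwoI]
    (ha : ∀ x : ZTwoI, (DihedralGroup.sr 0 : DihedralGroup 4) • x = (x.1, -x.2))
    (hb : ∀ x : ZTwoI, (DihedralGroup.r 1 : DihedralGroup 4) • x = (-x.2, x.1)) :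
    ∀ j : ℕ,
      (lowerRCentral (DihedralGroup 4) ZTwoI (j + 1)).relIndex
        (lowerRCentral (DihedralGroup 4) ZTwoI j) = 2 := by
  intro j
  rw [D8Gauss.lower_eq ha hb, D8Gauss.lower_eq ha hb]
  exact D8Gauss.relindex_L j
end

section
/- For the uniserial action of D₈ on ℤ₂[i] (a acting by conjugation, b by multiplication by i), the lower D₈-central series of N = ℤ₂[i] satisfies N₂ₖ = 2^k·ℤ₂[i] for every k ≥ 0; equivalently, the (2k)-th term of the lower central series is 2^k ℤ₂[i]. -/
/-- `2^k · ℤ₂[i]` as an additive subgroup. -/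
noncomputable def zA (k : ℕ) : AddSubgroup ZTwoI where
  carrier := {x | ∃ y : ZTwoI, x = (2 ^ k : ℕ) • y}
  add_mem' := by rintro x y ⟨u, rfl⟩ ⟨v, rfl⟩; exact ⟨u + v, (smul_add _ _ _).symm⟩
  zero_mem' := ⟨0, (smul_zero _).symm⟩
  neg_mem' := by rintro x ⟨u, rfl⟩; exact ⟨-u, (smul_neg _ _).symm⟩

/-- `2^k (1-i) · ℤ₂[i]` as an additive subgroup. -/
noncomputable def zB (k : ℕ) : AddSubgroup ZTwoI where
  carrier := {x | ∃ u v : PadicInt 2, x = (2 ^ k : ℕ) • ((u + v, v - u) : ZTwoI)}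
  add_mem' := by
    rintro x y ⟨u, v, rfl⟩ ⟨u', v', rfl⟩
    refine ⟨u + u', v + v', ?_⟩
    rw [← smul_add]
    congr 1
    rw [Prod.ext_iff]; constructor <;> simp <;> ring
  zero_mem' := ⟨0, 0, by simp; rfl⟩
  neg_mem' := by
    rintro x ⟨u, v, rfl⟩
    refine ⟨-u, -v, ?_⟩
    rw [← smul_neg]
    congr 1
    rw [Prod.ext_iff]; constructor <;> simp <;> ring

lemma mem_zA {k : ℕ} {x : ZTwoI} : x ∈ zA k ↔ ∃ y : ZTwoI, x = (2 ^ k : ℕ) • y := Iff.rfl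

lemma mem_zB {k : ℕ} {x : ZTwoI} :
    x ∈ zB k ↔ ∃ u v : PadicInt 2, x = (2 ^ k : ℕ) • ((u + v, v - u) : ZTwoI) := Iff.rfl

lemma zmod4_cases : ∀ i : ZMod 4, i = 0 ∨ i = 1 ∨ i = 2 ∨ i = 3 := by decide

/-- For the uniserial action of `D₈` on `ℤ₂[i]` (`a = sr 0` acting by complex conjugation,
`b = r 1` by multiplication by `i`), the lower `D₈`-central series of `N = ℤ₂[i]`
satisfies `N_{2k} = 2^k·ℤ₂[i]` for every `k ≥ 0`. -/
theorem d8_lowerCentral_even_term_eq_pow_two_smul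
    [inst : DistribMulAction (DihedralGroup 4) ZTwoI]
    [SMulCommClass (DihedralGroup 4) (PadicInt 2) ZTwoI]
    (ha : ∀ x : ZTwoI, (DihedralGroup.sr 0 : DihedralGroup 4) • x = (x.1, -x.2))
    (hb : ∀ x : ZTwoI, (DihedralGroup.r 1 : DihedralGroup 4) • x = (-x.2, x.1)) :
    ∀ k : ℕ, ∀ x : ZTwoI,
      x ∈ lowerRCentral (DihedralGroup 4) ZTwoI (2 * k) ↔ ∃ y : ZTwoI, x = (2 ^ k : ℕ) • y := by
  have hscale : ∀ (g : DihedralGroup 4) (n : ℕ) (m : ZTwoI), g • (n • m) = n • (g • m) :=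
    fun g n m => (DistribMulAction.toAddMonoidHom ZTwoI g).map_nsmul n m
  have hsm : ∀ (n : ℕ) (a b : PadicInt 2),
      n • ((a, b) : ZTwoI) = (((n : PadicInt 2)) * a, ((n : PadicInt 2)) * b) := by
    intro n a b; simp [Prod.ext_iff, nsmul_eq_mul]
  have hb0 : ∀ x : ZTwoI, (DihedralGroup.r 0 : DihedralGroup 4) • x = x := by
    intro x; rw [show (DihedralGroup.r 0 : DihedralGroup 4) = 1 from rfl, one_smul]
  have hb2 : ∀ x : ZTwoI, (DihedralGroup.r 2 : DihedralGroup 4) • x = (-x.1, -x.2) := by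
    intro x
    rw [show (DihedralGroup.r 2 : DihedralGroup 4) = DihedralGroup.r 1 * DihedralGroup.r 1
      by decide, mul_smul, hb, hb]
  have hb3 : ∀ x : ZTwoI, (DihedralGroup.r 3 : DihedralGroup 4) • x = (x.2, -x.1) := by
    intro x
    rw [show (DihedralGroup.r 3 : DihedralGroup 4) = DihedralGroup.r 1 * DihedralGroup.r 2
      by decide, mul_smul, hb2, hb]
    simp
  have hs1 : ∀ x : ZTwoI, (DihedralGroup.sr 1 : DihedralGroup 4) • x = (-x.2, -x.1) := by
    intro x
    rw [show (DihedralGroup.sr 1 : DihedralGroup 4) = DihedralGroup.sr 0 * DihedralGroup.r 1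
      by decide, mul_smul, hb, ha]
  have hs2 : ∀ x : ZTwoI, (DihedralGroup.sr 2 : DihedralGroup 4) • x = (-x.1, x.2) := by
    intro x
    rw [show (DihedralGroup.sr 2 : DihedralGroup 4) = DihedralGroup.sr 0 * DihedralGroup.r 2
      by decide, mul_smul, hb2, ha]
    simp
  have hs3 : ∀ x : ZTwoI, (DihedralGroup.sr 3 : DihedralGroup 4) • x = (x.2, x.1) := by
    intro x
    rw [show (DihedralGroup.sr 3 : DihedralGroup 4) = DihedralGroup.sr 0 * DihedralGroup.r 3
      by decide, mul_smul, hb3, ha]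
    simp
  -- L1 : every commutator lands in (1-i)ℤ₂[i]
  have L1 : ∀ (g : DihedralGroup 4) (m : ZTwoI), ∃ u v : PadicInt 2,
      g • m - m = ((u + v, v - u) : ZTwoI) := by
    rintro (⟨i⟩ | ⟨i⟩) m <;> rcases zmod4_cases i with rfl | rfl | rfl | rfl
    · exact ⟨0, 0, by rw [hb0]; simp; rfl⟩
    · exact ⟨-m.1, -m.2, by rw [hb]; rw [Prod.ext_iff]; constructor <;> simp <;> ring⟩
    · exact ⟨m.2 - m.1, -m.1 - m.2, by rw [hb2]; rw [Prod.ext_iff]; constructor <;> simp <;> ring⟩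
    · exact ⟨m.2, -m.1, by rw [hb3]; rw [Prod.ext_iff]; constructor <;> simp <;> ring⟩
    · exact ⟨m.2, -m.2, by rw [ha]; rw [Prod.ext_iff]; constructor <;> simp <;> ring⟩
    · exact ⟨0, -m.1 - m.2, by rw [hs1]; rw [Prod.ext_iff]; constructor <;> simp <;> ring⟩
    · exact ⟨-m.1, -m.1, by rw [hs2]; rw [Prod.ext_iff]; constructor <;> simp <;> ring⟩
    · exact ⟨m.2 - m.1, 0, by rw [hs3]; rw [Prod.ext_iff]; constructor <;> simp <;> ring⟩
  -- L2 : commutators of (1-i)-multiples land in 2ℤ₂[i]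
  have L2 : ∀ (g : DihedralGroup 4) (u v : PadicInt 2), ∃ p : ZTwoI,
      g • ((u + v, v - u) : ZTwoI) - (u + v, v - u) = (2 : ℕ) • p := by
    rintro (⟨i⟩ | ⟨i⟩) u v <;> rcases zmod4_cases i with rfl | rfl | rfl | rfl
    · exact ⟨0, by rw [hb0]; simp⟩
    · exact ⟨(-v, u), by rw [hb, hsm]; rw [Prod.ext_iff]; constructor <;> simp <;> push_cast <;> ring⟩
    · exact ⟨(-u - v, u - v), by rw [hb2, hsm]; rw [Prod.ext_iff]; constructor <;> simp <;> push_cast <;> ring⟩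
    · exact ⟨(-u, -v), by rw [hb3, hsm]; rw [Prod.ext_iff]; constructor <;> simp <;> push_cast <;> ring⟩
    · exact ⟨(0, u - v), by rw [ha, hsm]; rw [Prod.ext_iff]; constructor <;> simp <;> push_cast <;> ring⟩
    · exact ⟨(-v, -v), by rw [hs1, hsm]; rw [Prod.ext_iff]; constructor <;> simp <;> push_cast <;> ring⟩
    · exact ⟨(-u - v, 0), by rw [hs2, hsm]; rw [Prod.ext_iff]; constructor <;> simp <;> push_cast <;> ring⟩
    · exact ⟨(-u, u), by rw [hs3, hsm]; rw [Prod.ext_iff]; constructor <;> simp <;> push_cast <;> ring⟩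
  -- step A : N_j = 2^k ℤ₂[i]  ⟹  N_{j+1} = 2^k(1-i)ℤ₂[i]
  have stepA : ∀ (k j : ℕ),
      (∀ x, x ∈ lowerRCentral (DihedralGroup 4) ZTwoI j ↔ x ∈ zA k) →
      ∀ x, x ∈ lowerRCentral (DihedralGroup 4) ZTwoI (j + 1) ↔ x ∈ zB k := by
    intro k j hA x
    rw [show lowerRCentral (DihedralGroup 4) ZTwoI (j + 1)
        = AddSubgroup.closure {x | ∃ n ∈ lowerRCentral (DihedralGroup 4) ZTwoI j,
            ∃ g : DihedralGroup 4, x = g • n - n} from rfl]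
    constructor
    · intro hx
      refine (AddSubgroup.closure_le (zB k)).mpr ?_ hx
      rintro z ⟨n, hn, g, rfl⟩
      obtain ⟨m, rfl⟩ := mem_zA.mp ((hA n).mp hn)
      obtain ⟨u, v, h⟩ := L1 g m
      exact mem_zB.mpr ⟨u, v, by rw [hscale, ← smul_sub, h]⟩
    · intro hx
      obtain ⟨u, v, rfl⟩ := mem_zB.mp hx
      have hn : ((2 ^ k : ℕ) • ((u, v) : ZTwoI)) ∈ lowerRCentral (DihedralGroup 4) ZTwoI j :=
        (hA _).mpr (mem_zA.mpr ⟨_, rfl⟩)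
      have hgen : (DihedralGroup.r 1 : DihedralGroup 4) • ((2 ^ k : ℕ) • ((u, v) : ZTwoI))
          - (2 ^ k : ℕ) • ((u, v) : ZTwoI)
          ∈ AddSubgroup.closure {x | ∃ n ∈ lowerRCentral (DihedralGroup 4) ZTwoI j,
              ∃ g : DihedralGroup 4, x = g • n - n} :=
        AddSubgroup.subset_closure ⟨_, hn, DihedralGroup.r 1, rfl⟩
      have hneg := AddSubgroup.neg_mem _ hgen
      have heq : -((DihedralGroup.r 1 : DihedralGroup 4) • ((2 ^ k : ℕ) • ((u, v) : ZTwoI))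
          - (2 ^ k : ℕ) • ((u, v) : ZTwoI)) = (2 ^ k : ℕ) • ((u + v, v - u) : ZTwoI) := by
        rw [hscale, hb, ← smul_sub, ← smul_neg]
        congr 1
        rw [Prod.ext_iff]; constructor <;> simp <;> ring
      rwa [heq] at hneg
  -- step B : N_j = 2^k(1-i)ℤ₂[i]  ⟹  N_{j+1} = 2^{k+1} ℤ₂[i]
  have stepB : ∀ (k j : ℕ),
      (∀ x, x ∈ lowerRCentral (DihedralGroup 4) ZTwoI j ↔ x ∈ zB k) →
      ∀ x, x ∈ lowerRCentral (DihedralGroup 4) ZTwoI (j + 1) ↔ x ∈ zA (k + 1) := by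
    intro k j hB x
    rw [show lowerRCentral (DihedralGroup 4) ZTwoI (j + 1)
        = AddSubgroup.closure {x | ∃ n ∈ lowerRCentral (DihedralGroup 4) ZTwoI j,
            ∃ g : DihedralGroup 4, x = g • n - n} from rfl]
    constructor
    · intro hx
      refine (AddSubgroup.closure_le (zA (k + 1))).mpr ?_ hx
      rintro z ⟨n, hn, g, rfl⟩
      obtain ⟨u, v, rfl⟩ := mem_zB.mp ((hB n).mp hn)
      obtain ⟨p, h⟩ := L2 g u v
      refine mem_zA.mpr ⟨p, ?_⟩
      rw [hscale, ← smul_sub, h, pow_succ, mul_smul]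
    · intro hx
      obtain ⟨⟨u, v⟩, rfl⟩ := mem_zA.mp hx
      have hn : ((2 ^ k : ℕ) • ((u - v, u + v) : ZTwoI))
          ∈ lowerRCentral (DihedralGroup 4) ZTwoI j := by
        refine (hB _).mpr (mem_zB.mpr ⟨-v, u, ?_⟩)
        congr 1
        rw [Prod.ext_iff]; constructor <;> simp <;> ring
      have hgen : (DihedralGroup.r 1 : DihedralGroup 4) • ((2 ^ k : ℕ) • ((u - v, u + v) : ZTwoI))
          - (2 ^ k : ℕ) • ((u - v, u + v) : ZTwoI)
          ∈ AddSubgroup.closure {x | ∃ n ∈ lowerRCentral (DihedralGroup 4) ZTwoI j,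
              ∃ g : DihedralGroup 4, x = g • n - n} :=
        AddSubgroup.subset_closure ⟨_, hn, DihedralGroup.r 1, rfl⟩
      have hneg := AddSubgroup.neg_mem _ hgen
      have heq : -((DihedralGroup.r 1 : DihedralGroup 4) • ((2 ^ k : ℕ) • ((u - v, u + v) : ZTwoI))
          - (2 ^ k : ℕ) • ((u - v, u + v) : ZTwoI))
          = (2 ^ (k + 1) : ℕ) • ((u, v) : ZTwoI) := by
        rw [hscale, hb, ← smul_sub, ← smul_neg, hsm, hsm]
        rw [Prod.ext_iff]; constructor <;> simp <;> push_cast <;> ring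
      rwa [heq] at hneg
  -- main induction
  have main : ∀ k : ℕ,
      (∀ x, x ∈ lowerRCentral (DihedralGroup 4) ZTwoI (2 * k) ↔ x ∈ zA k) ∧
      (∀ x, x ∈ lowerRCentral (DihedralGroup 4) ZTwoI (2 * k + 1) ↔ x ∈ zB k) := by
    intro k
    induction k with
    | zero =>
      have h0 : ∀ x, x ∈ lowerRCentral (DihedralGroup 4) ZTwoI 0 ↔ x ∈ zA 0 := by
        intro x
        simp only [lowerRCentral, AddSubgroup.mem_top, true_iff]
        exact mem_zA.mpr ⟨x, by simp⟩
      exact ⟨h0, stepA 0 0 h0⟩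
    | succ k ih =>
      have h1 : ∀ x, x ∈ lowerRCentral (DihedralGroup 4) ZTwoI (2 * (k + 1)) ↔ x ∈ zA (k + 1) := by
        have h2 := stepB k (2 * k + 1) ih.2
        intro x
        rw [show 2 * (k + 1) = 2 * k + 1 + 1 by ring]
        exact h2 x
      exact ⟨h1, stepA (k + 1) (2 * (k + 1)) h1⟩
  intro k x
  exact (main k).1 x
end
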